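/- Uniqueness of principle dilations: any two principle homomorphism dilation systems (π₁, S₁, T₁, W₁) and (π₂, S₂, T₂, W₂) of a linear system (φ, A, V) are equivalent, i.e., there is a bijective linear R : W₁ → W₂ with R T₁ = T₂, S₂ R = S₁, and R π₁(a) = π₂(a) R for all a ∈ A. -/

import Mathlib

open scoped TensorProduct

variable (k : Type*) [Field k] (A : Type*) [Ring A] [Algebra k A]
  (V : Type*) [AddCommGroup V] [Module k V]

/-- any two principle (linearly minimal and irreducible) homomorphism
dilation systems of a linear system `(φ, A, V)` are equivalent. -/
theorem principle_dilations_equivalent (φ : A →ₗ[k] Module.End k V) (hφ : φ 1 = 1)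
    (W₁ : Type*) [AddCommGroup W₁] [Module k W₁]
    (W₂ : Type*) [AddCommGroup W₂] [Module k W₂]
    (π₁ : A →ₐ[k] Module.End k W₁) (T₁ : V →ₗ[k] W₁) (S₁ : W₁ →ₗ[k] V)
    (hT₁ : Function.Injective T₁) (hS₁ : Function.Surjective S₁)
    (hdil₁ : ∀ a : A, (φ a : V →ₗ[k] V) = S₁ ∘ₗ (π₁ a : W₁ →ₗ[k] W₁) ∘ₗ T₁)
    (hmin₁ : Submodule.span k {w : W₁ | ∃ (a : A) (x : V), w = π₁ a (T₁ x)} = ⊤)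
    (hirr₁ : ∀ K : Submodule k W₁, (∀ a : A, K.map (π₁ a : W₁ →ₗ[k] W₁) ≤ K) →
      K ≤ LinearMap.ker S₁ → K = ⊥)
    (π₂ : A →ₐ[k] Module.End k W₂) (T₂ : V →ₗ[k] W₂) (S₂ : W₂ →ₗ[k] V)
    (hT₂ : Function.Injective T₂) (hS₂ : Function.Surjective S₂)
    (hdil₂ : ∀ a : A, (φ a : V →ₗ[k] V) = S₂ ∘ₗ (π₂ a : W₂ →ₗ[k] W₂) ∘ₗ T₂)
    (hmin₂ : Submodule.span k {w : W₂ | ∃ (a : A) (x : V), w = π₂ a (T₂ x)} = ⊤)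
    (hirr₂ : ∀ K : Submodule k W₂, (∀ a : A, K.map (π₂ a : W₂ →ₗ[k] W₂) ≤ K) →
      K ≤ LinearMap.ker S₂ → K = ⊥) :
    ∃ R : W₁ ≃ₗ[k] W₂, (∀ x : V, R (T₁ x) = T₂ x) ∧ (∀ w : W₁, S₂ (R w) = S₁ w) ∧
      ∀ (a : A) (w : W₁), R (π₁ a w) = π₂ a (R w) := by
  classical
  set G : Set (W₁ × W₂) := {p | ∃ (a : A) (x : V), p = (π₁ a (T₁ x), π₂ a (T₂ x))} with hG
  set K : Submodule k (W₁ × W₂) := Submodule.span k G with hK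
  have hSeq : ∀ (a : A) (x : V), S₁ (π₁ a (T₁ x)) = S₂ (π₂ a (T₂ x)) := by
    intro a x
    have h1 := congrArg (fun f => f x) (hdil₁ a)
    have h2 := congrArg (fun f => f x) (hdil₂ a)
    simp only [LinearMap.comp_apply] at h1 h2
    rw [← h1, ← h2]
  have hgen : ∀ (a : A) (x : V), (π₁ a (T₁ x), π₂ a (T₂ x)) ∈ K := fun a x =>
    Submodule.subset_span ⟨a, x, rfl⟩
  have hinvmem : ∀ (a : A) (p : W₁ × W₂), p ∈ K → (π₁ a p.1, π₂ a p.2) ∈ K := by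
    intro a p hp
    have hle : K ≤ Submodule.comap ((π₁ a).prodMap (π₂ a) : W₁ × W₂ →ₗ[k] W₁ × W₂) K := by
      rw [hK, Submodule.span_le]
      rintro _ ⟨b, x, rfl⟩
      simp only [SetLike.mem_coe, Submodule.mem_comap, LinearMap.prodMap_apply]
      have he : (π₁ a (π₁ b (T₁ x)), π₂ a (π₂ b (T₂ x)))
          = (π₁ (a * b) (T₁ x), π₂ (a * b) (T₂ x)) := by
        simp [map_mul, Module.End.mul_apply]
      rw [he]
      exact hgen (a * b) x
    exact hle hp
  have hSK : ∀ p ∈ K, S₁ p.1 = S₂ p.2 := by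
    intro p hp
    have hle : K ≤ LinearMap.ker
        (S₁.comp (LinearMap.fst k W₁ W₂) - S₂.comp (LinearMap.snd k W₁ W₂)) := by
      rw [hK, Submodule.span_le]
      rintro _ ⟨a, x, rfl⟩
      simp only [SetLike.mem_coe, LinearMap.mem_ker, LinearMap.sub_apply,
        LinearMap.comp_apply, LinearMap.fst_apply, LinearMap.snd_apply]
      rw [hSeq a x, sub_self]
    have := hle hp
    simpa [sub_eq_zero] using this
  have hker₁ : ∀ p ∈ K, p.1 = 0 → p = 0 := by
    intro p hp h1
    set M : Submodule k W₂ := Submodule.map (LinearMap.snd k W₁ W₂)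
      (K ⊓ Submodule.prod ⊥ ⊤) with hM
    have hMinv : ∀ a : A, M.map (π₂ a : W₂ →ₗ[k] W₂) ≤ M := by
      rintro a _ ⟨_, ⟨q, ⟨hqK, hq0⟩, rfl⟩, rfl⟩
      refine ⟨(π₁ a q.1, π₂ a q.2), ⟨hinvmem a q hqK, ?_⟩, rfl⟩
      rcases Submodule.mem_prod.mp hq0 with ⟨hq1, -⟩
      exact Submodule.mem_prod.mpr ⟨by simp [(Submodule.mem_bot k).mp hq1], trivial⟩
    have hMker : M ≤ LinearMap.ker S₂ := by
      rintro _ ⟨q, ⟨hqK, hq0⟩, rfl⟩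
      rcases Submodule.mem_prod.mp hq0 with ⟨hq1, -⟩
      have hs := hSK q hqK
      have hz : q.1 = 0 := (Submodule.mem_bot k).mp hq1
      simp [LinearMap.mem_ker, ← hs, hz]
    have hM0 := hirr₂ M hMinv hMker
    have hp2 : p.2 ∈ M :=
      ⟨p, ⟨hp, Submodule.mem_prod.mpr ⟨by simp [h1], trivial⟩⟩, rfl⟩
    rw [hM0] at hp2
    exact Prod.ext h1 (Submodule.mem_bot k |>.mp hp2)
  have hker₂ : ∀ p ∈ K, p.2 = 0 → p = 0 := by
    intro p hp h2
    set M : Submodule k W₁ := Submodule.map (LinearMap.fst k W₁ W₂)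
      (K ⊓ Submodule.prod ⊤ ⊥) with hM
    have hMinv : ∀ a : A, M.map (π₁ a : W₁ →ₗ[k] W₁) ≤ M := by
      rintro a _ ⟨_, ⟨q, ⟨hqK, hq0⟩, rfl⟩, rfl⟩
      refine ⟨(π₁ a q.1, π₂ a q.2), ⟨hinvmem a q hqK, ?_⟩, rfl⟩
      rcases Submodule.mem_prod.mp hq0 with ⟨-, hq2⟩
      exact Submodule.mem_prod.mpr ⟨trivial, by simp [(Submodule.mem_bot k).mp hq2]⟩
    have hMker : M ≤ LinearMap.ker S₁ := by
      rintro _ ⟨q, ⟨hqK, hq0⟩, rfl⟩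
      rcases Submodule.mem_prod.mp hq0 with ⟨-, hq2⟩
      have hs := hSK q hqK
      have hz : q.2 = 0 := (Submodule.mem_bot k).mp hq2
      simp [LinearMap.mem_ker, hs, hz]
    have hM0 := hirr₁ M hMinv hMker
    have hp1 : p.1 ∈ M :=
      ⟨p, ⟨hp, Submodule.mem_prod.mpr ⟨trivial, by simp [h2]⟩⟩, rfl⟩
    rw [hM0] at hp1
    exact Prod.ext (Submodule.mem_bot k |>.mp hp1) h2
  set e₁ : K →ₗ[k] W₁ := (LinearMap.fst k W₁ W₂).comp K.subtype with he₁def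
  set e₂ : K →ₗ[k] W₂ := (LinearMap.snd k W₁ W₂).comp K.subtype with he₂def
  have hmap₁ : Submodule.map (LinearMap.fst k W₁ W₂) K = ⊤ := by
    rw [eq_top_iff, ← hmin₁, Submodule.span_le]
    rintro _ ⟨a, x, rfl⟩
    exact ⟨_, hgen a x, rfl⟩
  have hmap₂ : Submodule.map (LinearMap.snd k W₁ W₂) K = ⊤ := by
    rw [eq_top_iff, ← hmin₂, Submodule.span_le]
    rintro _ ⟨a, x, rfl⟩
    exact ⟨_, hgen a x, rfl⟩
  have he₁ : Function.Bijective e₁ := by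
    constructor
    · intro p q h
      have hd : ((p : W₁ × W₂) - (q : W₁ × W₂)) = 0 := by
        refine hker₁ _ (K.sub_mem p.2 q.2) ?_
        simpa [he₁def, Prod.fst_sub, sub_eq_zero] using h
      exact Subtype.ext (sub_eq_zero.mp hd)
    · intro w
      have hw : w ∈ Submodule.map (LinearMap.fst k W₁ W₂) K := by
        rw [hmap₁]; trivial
      rcases hw with ⟨p, hpK, hpw⟩
      exact ⟨⟨p, hpK⟩, hpw⟩
  have he₂ : Function.Bijective e₂ := by
    constructor
    · intro p q h
      have hd : ((p : W₁ × W₂) - (q : W₁ × W₂)) = 0 := by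
        refine hker₂ _ (K.sub_mem p.2 q.2) ?_
        simpa [he₂def, Prod.snd_sub, sub_eq_zero] using h
      exact Subtype.ext (sub_eq_zero.mp hd)
    · intro w
      have hw : w ∈ Submodule.map (LinearMap.snd k W₁ W₂) K := by
        rw [hmap₂]; trivial
      rcases hw with ⟨p, hpK, hpw⟩
      exact ⟨⟨p, hpK⟩, hpw⟩
  set E₁ : K ≃ₗ[k] W₁ := LinearEquiv.ofBijective e₁ he₁ with hE₁def
  set E₂ : K ≃ₗ[k] W₂ := LinearEquiv.ofBijective e₂ he₂ with hE₂def
  have hE : ∀ w : W₁, ((E₁.symm w : K) : W₁ × W₂).1 = w := fun w =>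
    E₁.apply_symm_apply w
  have huniq : ∀ p : W₁ × W₂, p ∈ K → ((E₁.symm p.1 : K) : W₁ × W₂) = p := by
    intro p hp
    have h1 : ((E₁.symm p.1 : K) : W₁ × W₂).1 = p.1 := hE p.1
    have hd := hker₁ _ (K.sub_mem (E₁.symm p.1).2 hp)
      (by simp [Prod.fst_sub, h1])
    exact sub_eq_zero.mp hd
  refine ⟨E₁.symm.trans E₂, ?_, ?_, ?_⟩
  · intro x
    have hmem : (T₁ x, T₂ x) ∈ K := by
      have := hgen 1 x
      simpa using this
    have h := huniq (T₁ x, T₂ x) hmem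
    show E₂ (E₁.symm (T₁ x)) = T₂ x
    have : E₂ (E₁.symm (T₁ x)) = ((E₁.symm (T₁ x) : K) : W₁ × W₂).2 := rfl
    rw [this, h]
  · intro w
    show S₂ (E₂ (E₁.symm w)) = S₁ w
    have h2 : E₂ (E₁.symm w) = ((E₁.symm w : K) : W₁ × W₂).2 := rfl
    rw [h2, ← hSK _ (E₁.symm w).2, hE w]
  · intro a w
    show E₂ (E₁.symm (π₁ a w)) = π₂ a (E₂ (E₁.symm w))
    set q : W₁ × W₂ := ((E₁.symm w : K) : W₁ × W₂) with hq
    have hqK : q ∈ K := (E₁.symm w).2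
    have hp : (π₁ a q.1, π₂ a q.2) ∈ K := hinvmem a q hqK
    have hq1 : q.1 = w := hE w
    have h := huniq (π₁ a q.1, π₂ a q.2) hp
    rw [hq1] at h
    have h2 : E₂ (E₁.symm (π₁ a w)) = ((E₁.symm (π₁ a w) : K) : W₁ × W₂).2 := rfl
    rw [h2, h]
    have h3 : E₂ (E₁.symm w) = q.2 := rfl
    rw [h3]
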